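/- (Nonnegative Bode integral for the disturbance response ratio.) Let N, D be coprime polynomials with real coefficients with deg N = deg D = n ≥ 2, equal leading coefficients and equal coefficients of degree n − 1 (so that R = N/D satisfies R(∞) = 1 and lim_{s→∞} s·(R(s) − 1) = 0, i.e., R − 1 has relative degree at least 2), and suppose every root of D has negative real part. Then the improper integral ∫₀^∞ ln |R(iω)| dω converges and equals π·Σ Re(γ), where the sum ranges over the roots γ of N with positive real part counted with multiplicity; in particular ∫₀^∞ ln |R(iω)| dω ≥ 0. -/

import Mathlib

open MeasureTheory Polynomial

noncomputable def Complex.abs : AbsoluteValue ℂ ℝ := IsAbsoluteValue.toAbsoluteValue (norm : ℂ → ℝ)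

lemma Complex.norm_eq_abs (z : ℂ) : ‖z‖ = Complex.abs z := rfl

lemma Complex.sq_abs (z : ℂ) : Complex.abs z ^ 2 = Complex.normSq z := Complex.sq_norm z

lemma Complex.abs_I : Complex.abs Complex.I = 1 := Complex.norm_I

lemma Complex.abs_ofReal (r : ℝ) : Complex.abs r = |r| := Complex.norm_real r

lemma Complex.abs.pos {z : ℂ} (h : z ≠ 0) : 0 < Complex.abs z := Complex.abs.pos_iff.mpr h

lemma Complex.continuous_abs : Continuous Complex.abs := continuous_norm

namespace BodeAux

/-- `log` is interval integrable on any interval. -/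
lemma intervalIntegrable_log' (a b : ℝ) :
    IntervalIntegrable Real.log volume a b := by
  have key : ∀ M : ℝ, 0 < M → IntegrableOn Real.log (Set.Ioc 0 M) := by
    intro M hM
    have h1 : IntegrableOn Real.log (Set.Ioc 0 1) := by
      have hg : IntegrableOn (fun x : ℝ => 2 * x ^ (-(1/2) : ℝ)) (Set.Ioc 0 1) := by
        have := (intervalIntegral.intervalIntegrable_rpow' (a := 0) (b := 1)
          (r := -(1/2)) (by norm_num)).const_mul 2
        rw [intervalIntegrable_iff, Set.uIoc_of_le (by norm_num : (0:ℝ) ≤ 1)] at this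
        exact this
      refine Integrable.mono' hg (Real.measurable_log.aestronglyMeasurable) ?_
      filter_upwards [ae_restrict_mem measurableSet_Ioc] with x hx
      rcases hx with ⟨hx0, hx1⟩
      rw [Real.norm_eq_abs, abs_of_nonpos (Real.log_nonpos hx0.le hx1)]
      have hxpos : (0:ℝ) < x := hx0
      rw [show -Real.log x = Real.log x⁻¹ from (Real.log_inv x).symm]
      have h3 : Real.log x⁻¹ ≤ x⁻¹ ^ ((1:ℝ)/2) / ((1:ℝ)/2) := by
        have := Real.log_le_rpow_div (x := x⁻¹) (by positivity) (ε := 1/2) (by norm_num)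
        simpa using this
      calc Real.log x⁻¹ ≤ x⁻¹ ^ ((1:ℝ)/2) / ((1:ℝ)/2) := h3
        _ = 2 * x ^ (-(1/2) : ℝ) := by
            rw [Real.inv_rpow hxpos.le, ← Real.rpow_neg hxpos.le]
            ring
    by_cases hM1 : M ≤ 1
    · exact h1.mono_set (Set.Ioc_subset_Ioc le_rfl hM1)
    · push_neg at hM1
      have h2 : IntegrableOn Real.log (Set.Ioc 1 M) :=
        (Real.continuousOn_log.mono (by
          intro x hx
          simp only [Set.mem_compl_iff, Set.mem_singleton_iff]
          exact ne_of_gt (lt_of_lt_of_le one_pos hx.1))).integrableOn_compact isCompact_Icc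
          |>.mono_set Set.Ioc_subset_Icc_self
      have := h1.union h2
      rwa [Set.Ioc_union_Ioc_eq_Ioc (by norm_num) hM1.le] at this
  have key2 : ∀ M : ℝ, 0 < M → IntervalIntegrable Real.log volume 0 M := by
    intro M hM
    rw [intervalIntegrable_iff, Set.uIoc_of_le hM.le]
    exact key M hM
  set M := |a| + |b| + 1 with hMdef
  have hMpos : 0 < M := by positivity
  have hneg : IntervalIntegrable Real.log volume (-M) 0 := by
    have : IntervalIntegrable (fun x => Real.log (-x)) volume (-0) (-M) :=
      (IntervalIntegrable.iff_comp_neg).mp (key2 M hMpos)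
    rw [neg_zero] at this
    replace this := this.symm
    exact this.congr (fun x _ => Real.log_neg_eq_log x)
  have hfull : IntervalIntegrable Real.log volume (-M) M :=
    hneg.trans (key2 M hMpos)
  refine hfull.mono_set ?_
  have ha : a ∈ Set.uIcc (-M) M := by
    rw [Set.uIcc_of_le (by linarith)]
    constructor <;> [cases abs_cases a <;> cases abs_cases b; cases abs_cases a <;> cases abs_cases b] <;> simp only [hMdef] <;> linarith [abs_nonneg a, abs_nonneg b, le_abs_self a, neg_abs_le a]
  have hb : b ∈ Set.uIcc (-M) M := by
    rw [Set.uIcc_of_le (by linarith)]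
    constructor <;> simp only [hMdef] <;> linarith [abs_nonneg a, abs_nonneg b, le_abs_self b, neg_abs_le b]
  exact Set.uIcc_subset_uIcc ha hb


/-- The per-root integrand. -/
noncomputable def L (c : ℂ) (ω : ℝ) : ℝ := Real.log (c.re^2 + (ω - c.im)^2) / 2

/-- The per-root antiderivative. -/
noncomputable def G (c : ℂ) (ω : ℝ) : ℝ :=
  (ω - c.im) * (Real.log (c.re^2 + (ω - c.im)^2) / 2 - 1)
    + c.re * Real.arctan ((ω - c.im) / c.re)

lemma L_eq (c : ℂ) (ω : ℝ) :
    Real.log (Complex.abs (Complex.I * ω - c)) = L c ω := by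
  have h : c.re^2 + (ω - c.im)^2 = (Complex.abs (Complex.I * ω - c))^2 := by
    rw [Complex.sq_abs, Complex.normSq_apply]
    simp [Complex.sub_re, Complex.sub_im, Complex.mul_re, Complex.mul_im]
    ring
  rw [L, h, Real.log_pow]
  push_cast
  ring

lemma L_eq_log_sub (b ω : ℝ) : L (Complex.I * b) ω = Real.log (ω - b) := by
  have : (Complex.I * b).re = 0 := by simp
  have h2 : (Complex.I * b).im = b := by simp
  rw [L, this, h2]
  rw [show (0:ℝ)^2 + (ω - b)^2 = (ω-b)^2 by ring, Real.log_pow]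
  push_cast; ring

lemma L_im_zero {c : ℂ} (hc : c.re = 0) (ω : ℝ) : L c ω = Real.log (ω - c.im) := by
  rw [L, hc, show (0:ℝ)^2 + (ω - c.im)^2 = (ω-c.im)^2 by ring, Real.log_pow]
  push_cast; ring

lemma continuous_G (c : ℂ) : Continuous (G c) := by
  by_cases hre : c.re = 0
  · have : G c = fun ω => (ω - c.im) * Real.log (ω - c.im) - (ω - c.im) := by
      funext ω
      rw [G, hre]
      rw [show (0:ℝ)^2 + (ω - c.im)^2 = (ω-c.im)^2 by ring, Real.log_pow]
      push_cast
      ring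
    rw [this]
    exact ((Real.continuous_mul_log.comp (continuous_id.sub continuous_const)).sub
      (continuous_id.sub continuous_const))
  · unfold G
    have hpos : ∀ ω : ℝ, c.re^2 + (ω - c.im)^2 ≠ 0 := by
      intro ω
      positivity
    apply Continuous.add
    · apply Continuous.mul (continuous_id.sub continuous_const)
      exact ((Continuous.log (by fun_prop) hpos).div_const 2).sub continuous_const
    · exact continuous_const.mul
        (Real.continuous_arctan.comp ((continuous_id.sub continuous_const).div_const c.re))

lemma hasDerivAt_G {c : ℂ} {ω : ℝ} (h : c.re ≠ 0 ∨ ω ≠ c.im) :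
    HasDerivAt (G c) (L c ω) ω := by
  have hq : (0:ℝ) < c.re^2 + (ω - c.im)^2 := by
    rcases h with h | h
    · positivity
    · have : (0:ℝ) < (ω - c.im)^2 := by
        have : ω - c.im ≠ 0 := sub_ne_zero.mpr h
        positivity
      positivity
  -- first part : (ω - b) * (log q / 2 - 1)
  have h1 : HasDerivAt (fun ω : ℝ => (ω - c.im) * (Real.log (c.re^2 + (ω - c.im)^2) / 2 - 1))
      ((Real.log (c.re^2 + (ω - c.im)^2) / 2 - 1)
        + (ω - c.im) * ((2 * (ω - c.im)) / (c.re^2 + (ω - c.im)^2) / 2)) ω := by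
    have hid : HasDerivAt (fun ω : ℝ => ω - c.im) 1 ω := (hasDerivAt_id ω).sub_const c.im
    have hinner : HasDerivAt (fun ω : ℝ => c.re^2 + (ω - c.im)^2) (2 * (ω - c.im)) ω := by
      have := ((hid.pow 2).const_add (c.re^2))
      simpa [mul_comm] using this
    have hlog : HasDerivAt (fun ω : ℝ => Real.log (c.re^2 + (ω - c.im)^2))
        ((2 * (ω - c.im)) / (c.re^2 + (ω - c.im)^2)) ω := hinner.log hq.ne'
    have := hid.mul ((hlog.div_const 2).sub_const 1)
    simp only [one_mul] at this
    exact this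
  by_cases hre : c.re = 0
  · have h2 : HasDerivAt (fun ω : ℝ => c.re * Real.arctan ((ω - c.im) / c.re)) 0 ω := by
      simp only [hre, zero_mul]
      exact hasDerivAt_const ω 0
    have := h1.add h2
    refine this.congr_deriv ?_
    have ht : ω - c.im ≠ 0 := sub_ne_zero.mpr (h.resolve_left (not_not_intro hre))
    have hone : (ω - c.im) * (2 * (ω - c.im) / (c.re^2 + (ω - c.im)^2) / 2) = 1 := by
      rw [hre]
      field_simp
      ring
    rw [L]
    linarith [hone]
  · have harc : HasDerivAt (fun ω : ℝ => c.re * Real.arctan ((ω - c.im) / c.re))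
        (c.re * ((1 / c.re) / (1 + ((ω - c.im) / c.re)^2))) ω := by
      have hid : HasDerivAt (fun ω : ℝ => (ω - c.im) / c.re) (1 / c.re) ω :=
        ((hasDerivAt_id ω).sub_const c.im).div_const c.re
      exact (Real.hasDerivAt_arctan _ |>.comp ω hid |>.const_mul c.re).congr_deriv (by ring)
    have := h1.add harc
    refine this.congr_deriv ?_
    rw [L]
    have h3 : 1 + ((ω - c.im) / c.re)^2 = (c.re^2 + (ω - c.im)^2) / c.re^2 := by
      field_simp
    rw [h3]
    field_simp
    ring


lemma intervalIntegrable_L (c : ℂ) (u v : ℝ) :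
    IntervalIntegrable (L c) volume u v := by
  by_cases hre : c.re = 0
  · have heq : L c = fun ω => Real.log (ω - c.im) := funext fun ω => L_im_zero hre ω
    rw [heq]
    have := (intervalIntegrable_log' (u - c.im) (v - c.im)).comp_sub_right c.im
    simpa using this
  · apply Continuous.intervalIntegrable
    have hpos : ∀ ω : ℝ, c.re^2 + (ω - c.im)^2 ≠ 0 := fun ω => by positivity
    exact (Continuous.log (by fun_prop) hpos).div_const 2

lemma integral_L_aux (c : ℂ) {u v : ℝ} (h : u ≤ v)
    (hnot : ∀ ω ∈ Set.Ioo u v, c.re ≠ 0 ∨ ω ≠ c.im) :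
    ∫ ω in u..v, L c ω = G c v - G c u := by
  refine intervalIntegral.integral_eq_sub_of_hasDeriv_right_of_le h
    ((continuous_G c).continuousOn) (fun ω hω => ?_) (intervalIntegrable_L c u v)
  exact (hasDerivAt_G (hnot ω hω)).hasDerivWithinAt

lemma integral_L_to_b (c : ℂ) (v : ℝ) :
    ∫ ω in c.im..v, L c ω = G c v - G c c.im := by
  rcases le_total c.im v with h | h
  · exact integral_L_aux c h (fun ω hω => Or.inr (ne_of_gt hω.1))
  · rw [intervalIntegral.integral_symm,
      integral_L_aux c h (fun ω hω => Or.inr (ne_of_lt hω.2))]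
    ring

lemma integral_L (c : ℂ) (u v : ℝ) :
    ∫ ω in u..v, L c ω = G c v - G c u := by
  have hadd := intervalIntegral.integral_add_adjacent_intervals
    (intervalIntegrable_L c u c.im) (intervalIntegrable_L c c.im v)
  have h1 : ∫ ω in u..c.im, L c ω = -(G c u - G c c.im) := by
    rw [intervalIntegral.integral_symm, integral_L_to_b c u]
  rw [h1, integral_L_to_b c v] at hadd
  rw [← hadd]
  ring


noncomputable def H (c : ℂ) (T : ℝ) : ℝ := G c T - (T - c.im) * (Real.log T - 1)

open Filter in
lemma tendsto_arctan_part (c : ℂ) :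
    Tendsto (fun T : ℝ => c.re * Real.arctan ((T - c.im) / c.re)) atTop
      (nhds (Real.pi / 2 * |c.re|)) := by
  rcases lt_trichotomy c.re 0 with h | h | h
  · have hlin : Tendsto (fun T : ℝ => (T - c.im) / c.re) atTop atBot := by
      exact (Filter.tendsto_div_const_atBot_of_neg h).mpr
        (tendsto_atTop_add_const_right _ _ tendsto_id)
    have harc : Tendsto (fun T : ℝ => Real.arctan ((T - c.im) / c.re)) atTop
        (nhds (-(Real.pi/2))) :=
      (Real.tendsto_arctan_atBot.mono_right nhdsWithin_le_nhds).comp hlin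
    have := harc.const_mul c.re
    convert this using 2
    rw [abs_of_neg h]
    ring
  · simp only [h, zero_mul, abs_zero, mul_zero]
    exact tendsto_const_nhds
  · have hlin : Tendsto (fun T : ℝ => (T - c.im) / c.re) atTop atTop := by
      exact Tendsto.atTop_div_const h (tendsto_atTop_add_const_right _ _ tendsto_id)
    have harc : Tendsto (fun T : ℝ => Real.arctan ((T - c.im) / c.re)) atTop
        (nhds (Real.pi/2)) :=
      (Real.tendsto_arctan_atTop.mono_right nhdsWithin_le_nhds).comp hlin
    have := harc.const_mul c.re
    convert this using 2
    rw [abs_of_pos h]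
    ring

open Filter in
lemma tendsto_H (c : ℂ) :
    Tendsto (H c) atTop (nhds (-c.im + Real.pi / 2 * |c.re|)) := by
  set a := c.re
  set b := c.im
  -- P1
  have hP1 : Tendsto (fun T : ℝ => (T - b) * (Real.log (1 + a^2 / (T - b)^2) / 2)) atTop
      (nhds 0) := by
    have hcomp : Tendsto (fun T : ℝ => T - b) atTop atTop :=
      tendsto_atTop_add_const_right _ _ tendsto_id
    suffices hy : Tendsto (fun y : ℝ => y * (Real.log (1 + a^2 / y^2) / 2)) atTop (nhds 0) by
      exact hy.comp hcomp
    have h1 : Tendsto (fun x : ℝ => x * Real.log (1 + a^2 / x)) atTop (nhds (a^2)) :=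
      Real.tendsto_mul_log_one_add_div_atTop (a^2)
    have hsq : Tendsto (fun y : ℝ => y^2) atTop atTop := by
      exact tendsto_pow_atTop (by norm_num)
    have h2 : Tendsto (fun y : ℝ => y^2 * Real.log (1 + a^2 / y^2)) atTop (nhds (a^2)) :=
      h1.comp hsq
    have hinv : Tendsto (fun y : ℝ => 1 / y) atTop (nhds 0) := by
      simpa using (tendsto_inv_atTop_zero : Tendsto (fun y : ℝ => y⁻¹) atTop (nhds 0))
    have h3 : Tendsto (fun y : ℝ => (1 / y) * (y^2 * Real.log (1 + a^2 / y^2)) / 2) atTop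
        (nhds 0) := by
      have := (hinv.mul h2).div_const 2
      simpa using this
    refine h3.congr' ?_
    filter_upwards [eventually_gt_atTop (0:ℝ)] with y hy
    field_simp
  -- P2
  have hP2 : Tendsto (fun T : ℝ => (T - b) * Real.log (1 + (-b) / T)) atTop (nhds (-b)) := by
    have h1 : Tendsto (fun T : ℝ => T * Real.log (1 + (-b) / T)) atTop (nhds (-b)) :=
      Real.tendsto_mul_log_one_add_div_atTop (-b)
    have h2 : Tendsto (fun T : ℝ => Real.log (1 + (-b) / T)) atTop (nhds 0) := by
      have hx : Tendsto (fun T : ℝ => 1 + (-b) / T) atTop (nhds 1) := by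
        have : Tendsto (fun T : ℝ => (-b) / T) atTop (nhds 0) := by
          simpa [div_eq_mul_inv] using tendsto_inv_atTop_zero.const_mul (-b)
        simpa using (tendsto_const_nhds.add this : Tendsto (fun T : ℝ => 1 + (-b)/T) atTop (nhds (1 + 0)))
      have := (Real.continuousAt_log (by norm_num : (1:ℝ) ≠ 0)).tendsto.comp hx
      simpa [Function.comp_def] using this
    have h3 := h1.sub (h2.const_mul b)
    rw [mul_zero, sub_zero] at h3
    refine h3.congr fun T => ?_
    ring
  -- arctan
  have hA := tendsto_arctan_part c
  -- assemble
  have hsum := (hP1.add hP2).add hA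
  rw [zero_add] at hsum
  refine hsum.congr' ?_
  filter_upwards [eventually_gt_atTop (max b 0 + 1)] with T hT
  have hT0 : 0 < T := lt_of_le_of_lt (by positivity) (lt_of_le_of_lt (le_max_right b 0) (by linarith [le_of_lt hT]))
  have hTb : 0 < T - b := by
    have := le_max_left b 0
    have h2 := lt_of_le_of_lt (le_max_left b 0) (show max b 0 < T by linarith)
    linarith
  have key1 : Real.log (1 + a^2 / (T - b)^2) = Real.log (a^2 + (T-b)^2) - Real.log ((T-b)^2) := by
    rw [show 1 + a^2/(T-b)^2 = (a^2+(T-b)^2)/(T-b)^2 by field_simp; ring]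
    rw [Real.log_div (by positivity) (by positivity)]
  have key2 : Real.log (1 + (-b) / T) = Real.log (T - b) - Real.log T := by
    rw [show 1 + (-b)/T = (T - b)/T by field_simp; ring]
    rw [Real.log_div (by positivity) (by positivity)]
  have key3 : Real.log ((T-b)^2) = 2 * Real.log (T-b) := by
    rw [Real.log_pow]; push_cast; ring
  show (T - b) * (Real.log (1 + a^2 / (T - b)^2) / 2) + (T - b) * Real.log (1 + (-b)/T)
      + c.re * Real.arctan ((T - c.im)/c.re) = H c T
  rw [H, G, key1, key2, key3]
  ring


lemma log_multiset_prod (s : Multiset ℝ) (h : ∀ x ∈ s, x ≠ 0) :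
    Real.log s.prod = (s.map Real.log).sum := by
  induction s using Multiset.induction with
  | empty => simp
  | cons a s ih =>
    rw [Multiset.prod_cons, Multiset.map_cons, Multiset.sum_cons,
      Real.log_mul (h a (Multiset.mem_cons_self a s))
        (Multiset.prod_ne_zero fun h0 => h 0 (Multiset.mem_cons_of_mem h0) rfl),
      ih fun x hx => h x (Multiset.mem_cons_of_mem hx)]

lemma pow_card_le_prod_map (s : Multiset ℂ) (f : ℂ → ℝ) (r : ℝ) (hr : 0 ≤ r)
    (h : ∀ x ∈ s, r ≤ f x) : r ^ Multiset.card s ≤ (s.map f).prod := by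
  induction s using Multiset.induction with
  | empty => simp
  | cons a s ih =>
    rw [Multiset.map_cons, Multiset.prod_cons, Multiset.card_cons, pow_succ, mul_comm]
    have h1 : r ≤ f a := h a (Multiset.mem_cons_self a s)
    have h2 : r ^ Multiset.card s ≤ (s.map f).prod :=
      ih fun x hx => h x (Multiset.mem_cons_of_mem hx)
    exact mul_le_mul h1 h2 (pow_nonneg hr _) (le_trans hr h1)

lemma intervalIntegrable_sumL (s : Multiset ℂ) (u v : ℝ) :
    IntervalIntegrable (fun ω => (s.map (fun c => L c ω)).sum) volume u v := by
  induction s using Multiset.induction with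
  | empty => simp [intervalIntegrable_const]
  | cons a s ih =>
    simp only [Multiset.map_cons, Multiset.sum_cons]
    exact (intervalIntegrable_L a u v).add ih

lemma integral_sumL (s : Multiset ℂ) (u v : ℝ) :
    ∫ ω in u..v, (s.map (fun c => L c ω)).sum
      = (s.map (fun c => G c v)).sum - (s.map (fun c => G c u)).sum := by
  induction s using Multiset.induction with
  | empty => simp
  | cons a s ih =>
    simp only [Multiset.map_cons, Multiset.sum_cons]
    rw [intervalIntegral.integral_add (intervalIntegrable_L a u v)
      (intervalIntegrable_sumL s u v), integral_L, ih]
    ring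

open Filter in
lemma tendsto_sumH (s : Multiset ℂ) :
    Tendsto (fun T => (s.map (fun c => H c T)).sum) atTop
      (nhds ((s.map (fun c => -c.im + Real.pi / 2 * |c.re|)).sum)) := by
  induction s using Multiset.induction with
  | empty => simp [tendsto_const_nhds]
  | cons a s ih =>
    simp only [Multiset.map_cons, Multiset.sum_cons]
    exact (tendsto_H a).add ih


lemma log_abs_eval {p : Polynomial ℂ} {z : ℂ} (hz : p.eval z ≠ 0) :
    Real.log (Complex.abs (p.eval z))
      = Real.log (Complex.abs p.leadingCoeff)
        + (p.roots.map (fun c => Real.log (Complex.abs (z - c)))).sum := by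
  have hfac := (IsAlgClosed.splits p).eq_prod_roots
  have heval : p.eval z = p.leadingCoeff * ((p.roots.map (fun c => z - c)).prod) := by
    conv_lhs => rw [hfac]
    rw [eval_mul, eval_C, eval_multiset_prod, Multiset.map_map]
    simp
  have habs : Complex.abs (p.eval z)
      = Complex.abs p.leadingCoeff * ((p.roots.map (fun c => Complex.abs (z - c))).prod) := by
    rw [heval, map_mul]
    congr 1
    have := map_multiset_prod Complex.abs.toMonoidHom (Multiset.map (fun c => z - c) p.roots)
    simpa [Multiset.map_map] using this
  have hne : Complex.abs (p.eval z) ≠ 0 := by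
    simpa using hz
  rw [habs] at hne
  obtain ⟨hleadne, hprodne⟩ := mul_ne_zero_iff.mp hne
  rw [habs, Real.log_mul hleadne hprodne, log_multiset_prod, Multiset.map_map]
  · rfl
  · intro x hx h0
    subst h0
    exact hprodne (Multiset.prod_eq_zero hx)

lemma log_abs_eval_I {p : Polynomial ℂ} {ω : ℝ} (hz : p.eval (Complex.I * ω) ≠ 0) :
    Real.log (Complex.abs (p.eval (Complex.I * ω)))
      = Real.log (Complex.abs p.leadingCoeff) + (p.roots.map (fun c => L c ω)).sum := by
  rw [log_abs_eval hz]
  congr 1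
  exact congrArg _ (Multiset.map_congr rfl fun c _ => L_eq c ω)

lemma card_roots_eq (p : Polynomial ℂ) : Multiset.card p.roots = p.natDegree :=
  (splits_iff_card_roots.mp (IsAlgClosed.splits p))

lemma sum_roots_eq (p : Polynomial ℂ) (hp : p ≠ 0) (hd : p.natDegree ≠ 0) :
    p.roots.sum = -(p.coeff (p.natDegree - 1) / p.leadingCoeff) := by
  have hlead : p.leadingCoeff ≠ 0 := leadingCoeff_ne_zero.mpr hp
  set q := p * Polynomial.C p.leadingCoeff⁻¹ with hq
  have hmon : q.Monic := monic_mul_leadingCoeff_inv hp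
  have hroots : q.roots = p.roots := by
    rw [hq, mul_comm, roots_C_mul _ (inv_ne_zero hlead)]
  have hdeg : q.natDegree = p.natDegree := by
    rw [hq, natDegree_mul_C (inv_ne_zero hlead)]
  have hsum := (IsAlgClosed.splits q).nextCoeff_eq_neg_sum_roots_of_monic hmon
  rw [hroots] at hsum
  have h2 : q.nextCoeff = p.coeff (p.natDegree - 1) * p.leadingCoeff⁻¹ := by
    rw [nextCoeff_of_natDegree_pos (hdeg ▸ Nat.pos_of_ne_zero hd), hdeg, hq, coeff_mul_C]
  have h3 : p.roots.sum = -q.nextCoeff := by rw [hsum, neg_neg]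
  rw [h3, h2]
  field_simp

lemma roots_conj_invariant (P : Polynomial ℝ) :
    (P.map (algebraMap ℝ ℂ)).roots.map (starRingEnd ℂ) = (P.map (algebraMap ℝ ℂ)).roots := by
  have h1 : (P.map (algebraMap ℝ ℂ)).map (starRingEnd ℂ) = P.map (algebraMap ℝ ℂ) := by
    rw [Polynomial.map_map]
    congr 1
    exact RingHom.ext fun r => by simp
  conv_rhs => rw [← h1, (IsAlgClosed.splits _).roots_map_of_injective (starRingEnd ℂ).injective]

lemma G_conj_zero (c : ℂ) : G ((starRingEnd ℂ) c) 0 = -(G c 0) := by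
  simp only [G, Complex.conj_re, Complex.conj_im]
  rw [show (0:ℝ) - -c.im = -((0:ℝ) - c.im) by ring, neg_pow, show ((-1:ℝ))^2 = 1 by norm_num,
    one_mul, neg_div, Real.arctan_neg]
  ring

lemma sum_G_zero_eq_zero (P : Polynomial ℝ) :
    ((P.map (algebraMap ℝ ℂ)).roots.map (fun c => G c 0)).sum = 0 := by
  have key : (((P.map (algebraMap ℝ ℂ)).roots.map (fun c => G c 0)).sum)
      = -(((P.map (algebraMap ℝ ℂ)).roots.map (fun c => G c 0)).sum) := by
    conv_lhs => rw [← roots_conj_invariant P, Multiset.map_map]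
    rw [show ((fun c => G c 0) ∘ (starRingEnd ℂ)) = fun c => -(G c 0) from
      funext fun c => G_conj_zero c]
    rw [show (fun c => -(G c 0)) = (Neg.neg ∘ fun c => G c 0) from rfl,
      ← Multiset.map_map, Multiset.sum_map_neg']
  linarith [key]


lemma eval_abs_le (p : Polynomial ℂ) :
    ∃ C : ℝ, 0 ≤ C ∧ ∀ ω : ℝ, 1 ≤ ω →
      Complex.abs (p.eval (Complex.I * ω)) ≤ C * ω ^ p.natDegree := by
  refine ⟨∑ i ∈ Finset.range (p.natDegree + 1), Complex.abs (p.coeff i),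
    Finset.sum_nonneg fun i _ => Complex.abs.nonneg _, fun ω hω => ?_⟩
  have hω0 : (0:ℝ) < ω := lt_of_lt_of_le one_pos hω
  have habsI : Complex.abs (Complex.I * ω) = ω := by
    rw [map_mul, Complex.abs_I, one_mul, Complex.abs_ofReal, abs_of_pos hω0]
  rw [Polynomial.eval_eq_sum_range]
  calc Complex.abs (∑ i ∈ Finset.range (p.natDegree + 1), p.coeff i * (Complex.I * ω) ^ i)
      ≤ ∑ i ∈ Finset.range (p.natDegree + 1), Complex.abs (p.coeff i * (Complex.I * ω) ^ i) :=
        Complex.abs.sum_le _ _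
    _ = ∑ i ∈ Finset.range (p.natDegree + 1), Complex.abs (p.coeff i) * ω ^ i := by
        refine Finset.sum_congr rfl fun i _ => ?_
        rw [map_mul, map_pow, habsI]
    _ ≤ ∑ i ∈ Finset.range (p.natDegree + 1), Complex.abs (p.coeff i) * ω ^ p.natDegree := by
        refine Finset.sum_le_sum fun i hi => ?_
        exact mul_le_mul_of_nonneg_left
          (pow_le_pow_right₀ hω (Nat.lt_succ_iff.mp (Finset.mem_range.mp hi)))
          (Complex.abs.nonneg _)
    _ = (∑ i ∈ Finset.range (p.natDegree + 1), Complex.abs (p.coeff i)) * ω ^ p.natDegree := by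
        rw [Finset.sum_mul]

lemma eval_abs_ge (p : Polynomial ℂ) :
    ∃ T₀ : ℝ, 1 ≤ T₀ ∧ ∀ ω : ℝ, T₀ ≤ ω →
      Complex.abs p.leadingCoeff * (ω/2) ^ p.natDegree ≤ Complex.abs (p.eval (Complex.I * ω)) := by
  have hSnn : (0:ℝ) ≤ (p.roots.map Complex.abs).sum :=
    Multiset.sum_nonneg (by
      intro x hx
      obtain ⟨c, _, rfl⟩ := Multiset.mem_map.mp hx
      exact Complex.abs.nonneg c)
  refine ⟨2 * (p.roots.map Complex.abs).sum + 1, by linarith, fun ω hω => ?_⟩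
  have hω1 : (1:ℝ) ≤ ω := le_trans (by linarith) hω
  have hω0 : (0:ℝ) < ω := lt_of_lt_of_le one_pos hω1
  have habsI : Complex.abs (Complex.I * ω) = ω := by
    rw [map_mul, Complex.abs_I, one_mul, Complex.abs_ofReal, abs_of_pos hω0]
  have hfac := (IsAlgClosed.splits p).eq_prod_roots
  have heval : p.eval (Complex.I * ω)
      = p.leadingCoeff * ((p.roots.map (fun c => Complex.I * ω - c)).prod) := by
    conv_lhs => rw [hfac]
    rw [eval_mul, eval_C, eval_multiset_prod, Multiset.map_map]
    simp
  have habs : Complex.abs (p.eval (Complex.I * ω))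
      = Complex.abs p.leadingCoeff
        * ((p.roots.map (fun c => Complex.abs (Complex.I * ω - c))).prod) := by
    rw [heval, map_mul]
    congr 1
    have := map_multiset_prod Complex.abs.toMonoidHom
      (Multiset.map (fun c => Complex.I * ω - c) p.roots)
    simpa [Multiset.map_map] using this
  rw [habs]
  refine mul_le_mul_of_nonneg_left ?_ (Complex.abs.nonneg _)
  have hcard := card_roots_eq p
  rw [← hcard]
  refine pow_card_le_prod_map _ _ _ (by positivity) fun c hc => ?_
  have hc' : Complex.abs c ≤ (p.roots.map Complex.abs).sum :=
    Multiset.single_le_sum (fun x hx => by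
      obtain ⟨d, _, rfl⟩ := Multiset.mem_map.mp hx
      exact Complex.abs.nonneg d) _ (Multiset.mem_map_of_mem _ hc)
  have h1 : Complex.abs (Complex.I * ω) - Complex.abs c ≤ Complex.abs (Complex.I * ω - c) := by
    rw [← Complex.norm_eq_abs, ← Complex.norm_eq_abs, ← Complex.norm_eq_abs]
    exact norm_sub_norm_le _ _
  rw [habsI] at h1
  linarith

lemma abs_log_abs_le {z : ℂ} (h : Complex.abs (z - 1) ≤ 1/2) :
    |Real.log (Complex.abs z)| ≤ 2 * Complex.abs (z - 1) := by
  set e := Complex.abs (z - 1) with he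
  have he0 : 0 ≤ e := Complex.abs.nonneg _
  have hup : Complex.abs z ≤ 1 + e := by
    calc Complex.abs z = Complex.abs (1 + (z - 1)) := by ring_nf
      _ ≤ Complex.abs 1 + e := Complex.abs.add_le _ _
      _ = 1 + e := by rw [map_one]
  have hlo : 1 - e ≤ Complex.abs z := by
    have h9 : ‖z - (z - 1)‖ ≤ ‖z‖ + ‖z - 1‖ := norm_sub_le _ _
    simp only [Complex.norm_eq_abs] at h9
    rw [show z - (z - 1) = 1 by ring, map_one] at h9
    linarith
  have hzpos : (0:ℝ) < Complex.abs z := by linarith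
  have hupper : Real.log (Complex.abs z) ≤ 2 * e := by
    calc Real.log (Complex.abs z) ≤ Complex.abs z - 1 := Real.log_le_sub_one_of_pos hzpos
      _ ≤ e := by linarith
      _ ≤ 2 * e := by linarith
  have hlower : -(2 * e) ≤ Real.log (Complex.abs z) := by
    have hinv : (Complex.abs z)⁻¹ ≤ 1 + 2 * e := by
      rw [inv_eq_one_div, div_le_iff₀ hzpos]
      nlinarith
    have h2 : Real.log ((Complex.abs z)⁻¹) ≤ 2 * e := by
      calc Real.log ((Complex.abs z)⁻¹) ≤ (Complex.abs z)⁻¹ - 1 :=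
            Real.log_le_sub_one_of_pos (by positivity)
        _ ≤ 2 * e := by linarith
    rw [Real.log_inv] at h2
    linarith
  exact abs_le.mpr ⟨hlower, hupper⟩


lemma sum_map_im (s : Multiset ℂ) : (s.map Complex.im).sum = s.sum.im := by
  induction s using Multiset.induction with
  | empty => simp
  | cons a s ih => simp [ih]

lemma sum_map_re (s : Multiset ℂ) : (s.map Complex.re).sum = s.sum.re := by
  induction s using Multiset.induction with
  | empty => simp
  | cons a s ih => simp [ih]

lemma sum_map_G_expand (T : ℝ) (s : Multiset ℂ) :
    (s.map (fun c => G c T)).sum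
      = (s.map (fun c => H c T)).sum
        + ((Multiset.card s : ℝ) * T - (s.map Complex.im).sum) * (Real.log T - 1) := by
  induction s using Multiset.induction with
  | empty => simp
  | cons a s ih =>
    simp only [Multiset.map_cons, Multiset.sum_cons, Multiset.card_cons]
    rw [ih, H]
    push_cast
    ring

lemma sum_map_limit_expand (s : Multiset ℂ) :
    (s.map (fun c => -c.im + Real.pi / 2 * |c.re|)).sum
      = -(s.map Complex.im).sum + Real.pi / 2 * (s.map (fun c => |c.re|)).sum := by
  induction s using Multiset.induction with
  | empty => simp
  | cons a s ih =>
    simp only [Multiset.map_cons, Multiset.sum_cons]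
    rw [ih]
    ring

end BodeAux

open BodeAux Filter

/-- Nonnegative Bode integral for the disturbance response ratio: if `R = N/D`
with `N, D` coprime real polynomials of equal degree `n ≥ 2`, equal leading
coefficients and equal coefficients in degree `n − 1` (so `R(∞) = 1` and `R − 1`
has relative degree at least 2), and all roots of `D` lie in the open left
half-plane, then `∫₀^∞ ln |R(iω)| dω` converges, equals `π·Σ Re(γ)` over the
open right half-plane roots `γ` of `N` with multiplicity, and is nonnegative. -/
theorem bode_integral_disturbance_response_ratio (n : ℕ) (hn : 2 ≤ n)
    (N D : Polynomial ℝ) (hcop : IsCoprime N D)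
    (hNdeg : N.natDegree = n) (hDdeg : D.natDegree = n)
    (hlead : N.coeff n = D.coeff n) (hnext : N.coeff (n - 1) = D.coeff (n - 1))
    (hstab : ∀ z ∈ (D.map (algebraMap ℝ ℂ)).roots, z.re < 0) :
    IntegrableOn
      (fun ω : ℝ => Real.log (Norm.norm
        ((N.map (algebraMap ℝ ℂ)).eval (Complex.I * ω) /
         (D.map (algebraMap ℝ ℂ)).eval (Complex.I * ω)))) (Set.Ioi 0) ∧
    ∫ ω in Set.Ioi (0 : ℝ), Real.log (Norm.norm
        ((N.map (algebraMap ℝ ℂ)).eval (Complex.I * ω) /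
         (D.map (algebraMap ℝ ℂ)).eval (Complex.I * ω))) =
      Real.pi *
        ((((N.map (algebraMap ℝ ℂ)).roots.filter (fun z => 0 < z.re)).map Complex.re).sum) ∧
    0 ≤ ∫ ω in Set.Ioi (0 : ℝ), Real.log (Norm.norm
        ((N.map (algebraMap ℝ ℂ)).eval (Complex.I * ω) /
         (D.map (algebraMap ℝ ℂ)).eval (Complex.I * ω))) := by
  classical
  simp only [Complex.norm_eq_abs]
  set Nc := N.map (algebraMap ℝ ℂ) with hNc
  set Dc := D.map (algebraMap ℝ ℂ) with hDc
  have hN0 : N ≠ 0 := by intro h; rw [h, natDegree_zero] at hNdeg; omega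
  have hD0 : D ≠ 0 := by intro h; rw [h, natDegree_zero] at hDdeg; omega
  have hinj : Function.Injective (algebraMap ℝ ℂ) := (algebraMap ℝ ℂ).injective
  have hNc0 : Nc ≠ 0 := by rw [hNc]; exact (Polynomial.map_ne_zero_iff hinj).mpr hN0
  have hDc0 : Dc ≠ 0 := by rw [hDc]; exact (Polynomial.map_ne_zero_iff hinj).mpr hD0
  have hNcdeg : Nc.natDegree = n := by
    rw [hNc, natDegree_map_eq_of_injective hinj, hNdeg]
  have hDcdeg : Dc.natDegree = n := by
    rw [hDc, natDegree_map_eq_of_injective hinj, hDdeg]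
  have hNlead : Nc.leadingCoeff = algebraMap ℝ ℂ (N.coeff n) := by
    rw [Polynomial.leadingCoeff, hNcdeg, hNc, coeff_map]
  have hDlead : Dc.leadingCoeff = algebraMap ℝ ℂ (D.coeff n) := by
    rw [Polynomial.leadingCoeff, hDcdeg, hDc, coeff_map]
  have hleadeq : Nc.leadingCoeff = Dc.leadingCoeff := by
    rw [hNlead, hDlead, hlead]
  have hDeval : ∀ ω : ℝ, Dc.eval (Complex.I * ω) ≠ 0 := by
    intro ω h
    have hmem : (Complex.I * (ω:ℂ)) ∈ Dc.roots := mem_roots'.mpr ⟨hDc0, h⟩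
    have := hstab _ hmem
    simp [Complex.mul_re] at this
  set f : ℝ → ℝ := fun ω =>
    Real.log (Complex.abs (Nc.eval (Complex.I * ω) / Dc.eval (Complex.I * ω))) with hfdef
  set F : ℝ → ℝ := fun ω =>
    (Nc.roots.map (fun c => L c ω)).sum - (Dc.roots.map (fun c => L c ω)).sum with hFdef
  have hfF : ∀ ω : ℝ, Nc.eval (Complex.I * ω) ≠ 0 → f ω = F ω := by
    intro ω hNe
    have hNabs : Complex.abs (Nc.eval (Complex.I * ω)) ≠ 0 := by simpa using hNe
    have hDabs : Complex.abs (Dc.eval (Complex.I * ω)) ≠ 0 := by simpa using hDeval ω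
    show Real.log _ = _
    rw [map_div₀, Real.log_div hNabs hDabs, log_abs_eval_I hNe, log_abs_eval_I (hDeval ω),
      hleadeq]
    show _ = F ω
    rw [hFdef]
    ring
  have hfin : {ω : ℝ | Nc.eval (Complex.I * ω) = 0}.Finite := by
    apply Set.Finite.subset (Nc.roots.toFinset.image Complex.im).finite_toSet
    intro ω hω
    simp only [Finset.coe_image, Set.mem_image, Finset.mem_coe, Multiset.mem_toFinset]
    exact ⟨Complex.I * ω, mem_roots'.mpr ⟨hNc0, hω⟩, by simp⟩
  have haeEq : f =ᶠ[ae volume] F := by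
    rw [Filter.EventuallyEq, ae_iff]
    refine measure_mono_null (fun ω h => ?_) (hfin.measure_zero _)
    by_contra h2
    exact h (hfF ω h2)
  have hcont : Continuous fun ω : ℝ => Nc.eval (Complex.I * ω) / Dc.eval (Complex.I * ω) := by
    have hmul : Continuous fun ω : ℝ => Complex.I * (ω:ℂ) :=
      continuous_const.mul Complex.continuous_ofReal
    have h1 : Continuous fun ω : ℝ => Nc.eval (Complex.I * ω) :=
      (Polynomial.continuous Nc).comp hmul
    have h2 : Continuous fun ω : ℝ => Dc.eval (Complex.I * ω) :=
      (Polynomial.continuous Dc).comp hmul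
    exact h1.div h2 hDeval
  have hmeasf : Measurable f :=
    Real.measurable_log.comp (Complex.continuous_abs.comp hcont).measurable
  -- tail bound data
  set Ec := (N - D).map (algebraMap ℝ ℂ) with hEc
  have hEsub : Ec = Nc - Dc := by rw [hEc, Polynomial.map_sub, ← hNc, ← hDc]
  have hEdeg : Ec.natDegree ≤ n - 2 := by
    rw [hEc, natDegree_map_eq_of_injective hinj]
    refine natDegree_le_iff_coeff_eq_zero.mpr fun m hm => ?_
    rw [Polynomial.coeff_sub]
    rcases lt_trichotomy m n with h | h | h
    · have : m = n - 1 := by omega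
      rw [this, hnext, sub_self]
    · rw [h, hlead, sub_self]
    · rw [coeff_eq_zero_of_natDegree_lt (by omega : N.natDegree < m),
        coeff_eq_zero_of_natDegree_lt (by omega : D.natDegree < m), sub_self]
  obtain ⟨C, hC0, hCb⟩ := eval_abs_le Ec
  obtain ⟨T₂, hT₂1, hT₂b⟩ := eval_abs_ge Dc
  have hDlead0 : (0:ℝ) < Complex.abs Dc.leadingCoeff :=
    Complex.abs.pos (leadingCoeff_ne_zero.mpr hDc0)
  set K := C * 2^n / Complex.abs Dc.leadingCoeff with hK
  have hK0 : 0 ≤ K := by positivity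
  set T₃ := max T₂ (Real.sqrt (2*K) + 1) with hT₃
  have hT₃1 : (1:ℝ) ≤ T₃ := le_trans hT₂1 (le_max_left _ _)
  have hT₃0 : (0:ℝ) < T₃ := lt_of_lt_of_le one_pos hT₃1
  have htail : ∀ ω : ℝ, T₃ ≤ ω → |f ω| ≤ 2 * K * (1/ω^2) := by
    intro ω hω
    have hω1 : (1:ℝ) ≤ ω := le_trans hT₃1 hω
    have hω0 : (0:ℝ) < ω := by linarith
    have hratio : Nc.eval (Complex.I * ω) / Dc.eval (Complex.I * ω) - 1
        = Ec.eval (Complex.I * ω) / Dc.eval (Complex.I * ω) := by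
      rw [hEsub, Polynomial.eval_sub]
      rw [div_sub_one (hDeval ω)]
    have hE : Complex.abs (Ec.eval (Complex.I * ω)) ≤ C * ω^(n-2) := by
      refine le_trans (hCb ω hω1) ?_
      exact mul_le_mul_of_nonneg_left (pow_le_pow_right₀ hω1 hEdeg) hC0
    have hDlow : Complex.abs Dc.leadingCoeff * (ω/2)^Dc.natDegree
        ≤ Complex.abs (Dc.eval (Complex.I * ω)) := hT₂b ω (le_trans (le_max_left _ _) hω)
    rw [hDcdeg] at hDlow
    have hDpos : (0:ℝ) < Complex.abs (Dc.eval (Complex.I * ω)) :=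
      Complex.abs.pos (hDeval ω)
    have hpow : ω^(n-2) * ω^2 = ω^n := by
      rw [← pow_add]
      congr 1
      omega
    have he : Complex.abs (Nc.eval (Complex.I * ω) / Dc.eval (Complex.I * ω) - 1)
        ≤ K / ω^2 := by
      rw [hratio, map_div₀]
      have hdl : (0:ℝ) < Complex.abs Dc.leadingCoeff * (ω/2)^n := by positivity
      calc Complex.abs (Ec.eval (Complex.I * ω)) / Complex.abs (Dc.eval (Complex.I * ω))
          ≤ (C * ω^(n-2)) / (Complex.abs Dc.leadingCoeff * (ω/2)^n) :=
            div_le_div₀ (by positivity) hE hdl hDlow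
        _ = K / ω^2 := by
            rw [hK, div_pow, div_eq_div_iff (by positivity) (by positivity)]
            field_simp
            rw [← hpow]
            ring
    have hKω : K / ω^2 ≤ 1/2 := by
      have hs : Real.sqrt (2*K) + 1 ≤ ω := le_trans (le_max_right _ _) hω
      have h2K : 2*K ≤ ω^2 := by
        have h1 : Real.sqrt (2*K) ≤ ω := by linarith
        have h2 : Real.sqrt (2*K)^2 ≤ ω^2 := pow_le_pow_left₀ (Real.sqrt_nonneg _) h1 2
        rwa [Real.sq_sqrt (by positivity)] at h2
      rw [div_le_iff₀ (by positivity)]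
      linarith
    have habs := abs_log_abs_le (le_trans he hKω)
    calc |f ω| ≤ 2 * Complex.abs (Nc.eval (Complex.I * ω) / Dc.eval (Complex.I * ω) - 1) :=
          habs
      _ ≤ 2 * (K / ω^2) := by linarith
      _ = 2 * K * (1/ω^2) := by ring
  have htailInt : IntegrableOn f (Set.Ioi T₃) := by
    have hg : IntegrableOn (fun ω : ℝ => ω ^ (-2:ℝ)) (Set.Ioi T₃) :=
      integrableOn_Ioi_rpow_of_lt (by norm_num) hT₃0
    refine Integrable.mono' (hg.const_mul (2*K)) hmeasf.aestronglyMeasurable.restrict ?_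
    filter_upwards [ae_restrict_mem measurableSet_Ioi] with ω hω
    have hω0 : (0:ℝ) < ω := lt_trans hT₃0 hω
    have hrw : ω ^ (-2:ℝ) = 1/ω^2 := by
      rw [Real.rpow_neg hω0.le, show ((2:ℝ)) = ((2:ℕ):ℝ) by norm_num, Real.rpow_natCast,
        one_div]
    rw [Real.norm_eq_abs, hrw]
    exact htail ω hω.le
  have hheadInt : IntegrableOn f (Set.Ioc 0 T₃) := by
    have hFint : IntegrableOn F (Set.Ioc 0 T₃) := by
      have := (intervalIntegrable_sumL Nc.roots 0 T₃).sub
        (intervalIntegrable_sumL Dc.roots 0 T₃)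
      rw [intervalIntegrable_iff, Set.uIoc_of_le hT₃0.le] at this
      exact this
    exact hFint.congr (ae_restrict_of_ae haeEq.symm)
  have hInt : IntegrableOn f (Set.Ioi 0) := by
    have := hheadInt.union htailInt
    rwa [Set.Ioc_union_Ioi_eq_Ioi hT₃0.le] at this
  -- root sums
  have hNsum := sum_roots_eq Nc hNc0 (by rw [hNcdeg]; omega)
  have hDsum := sum_roots_eq Dc hDc0 (by rw [hDcdeg]; omega)
  have hcoeffN : Nc.coeff (n-1) = algebraMap ℝ ℂ (N.coeff (n-1)) := by
    rw [hNc, coeff_map]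
  have hcoeffD : Dc.coeff (n-1) = algebraMap ℝ ℂ (D.coeff (n-1)) := by
    rw [hDc, coeff_map]
  have hsumeq : Nc.roots.sum = Dc.roots.sum := by
    rw [hNsum, hDsum, hNcdeg, hDcdeg, hcoeffN, hcoeffD, hnext, hleadeq]
  have hcardN : (Multiset.card Nc.roots : ℝ) = n := by
    rw [card_roots_eq, hNcdeg]
  have hcardD : (Multiset.card Dc.roots : ℝ) = n := by
    rw [card_roots_eq, hDcdeg]
  have him : (Nc.roots.map Complex.im).sum = (Dc.roots.map Complex.im).sum := by
    rw [sum_map_im, sum_map_im, hsumeq]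
  have hre : (Nc.roots.map Complex.re).sum = (Dc.roots.map Complex.re).sum := by
    rw [sum_map_re, sum_map_re, hsumeq]
  -- interval integral value
  have hGzeroN : (Nc.roots.map (fun c => G c 0)).sum = 0 := by
    have := sum_G_zero_eq_zero N
    rwa [← hNc] at this
  have hGzeroD : (Dc.roots.map (fun c => G c 0)).sum = 0 := by
    have := sum_G_zero_eq_zero D
    rwa [← hDc] at this
  have hIval : ∀ T : ℝ, (∫ ω in (0:ℝ)..T, f ω)
      = (Nc.roots.map (fun c => G c T)).sum - (Dc.roots.map (fun c => G c T)).sum := by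
    intro T
    have h1 : (∫ ω in (0:ℝ)..T, f ω) = ∫ ω in (0:ℝ)..T, F ω := by
      refine intervalIntegral.integral_congr_ae ?_
      filter_upwards [haeEq] with ω h
      exact fun _ => h
    rw [h1, hFdef]
    rw [intervalIntegral.integral_sub (intervalIntegrable_sumL Nc.roots 0 T)
      (intervalIntegrable_sumL Dc.roots 0 T), integral_sumL, integral_sumL,
      hGzeroN, hGzeroD]
    ring
  have hGH : ∀ T : ℝ,
      (Nc.roots.map (fun c => G c T)).sum - (Dc.roots.map (fun c => G c T)).sum
      = (Nc.roots.map (fun c => H c T)).sum - (Dc.roots.map (fun c => H c T)).sum := by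
    intro T
    rw [sum_map_G_expand, sum_map_G_expand, hcardN, hcardD, him]
    ring
  set V := (Nc.roots.map (fun c => -c.im + Real.pi/2 * |c.re|)).sum
    - (Dc.roots.map (fun c => -c.im + Real.pi/2 * |c.re|)).sum with hV
  have hlim1 : Tendsto (fun T => ∫ ω in (0:ℝ)..T, f ω) atTop
      (nhds (∫ ω in Set.Ioi (0:ℝ), f ω)) :=
    intervalIntegral_tendsto_integral_Ioi 0 hInt tendsto_id
  have hlim2 : Tendsto (fun T => ∫ ω in (0:ℝ)..T, f ω) atTop (nhds V) := by
    have := (tendsto_sumH Nc.roots).sub (tendsto_sumH Dc.roots)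
    refine this.congr fun T => ?_
    exact ((hIval T).trans (hGH T)).symm
  have hval : (∫ ω in Set.Ioi (0:ℝ), f ω) = V := tendsto_nhds_unique hlim1 hlim2
  -- final algebra
  set A := ((Nc.roots.filter (fun z => 0 < z.re)).map Complex.re).sum with hA
  have hDabs : (Dc.roots.map (fun c => |c.re|)).sum = -((Dc.roots.map Complex.re).sum) := by
    have h1 : Dc.roots.map (fun c => |c.re|) = Dc.roots.map (fun c => -c.re) :=
      Multiset.map_congr rfl fun c hc => abs_of_neg (hstab c hc)
    rw [h1, show (fun c : ℂ => -c.re) = (Neg.neg ∘ Complex.re) from rfl,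
      ← Multiset.map_map, Multiset.sum_map_neg']
  have hNabs2 : (Nc.roots.map (fun c => |c.re|)).sum
      = 2 * A - (Nc.roots.map Complex.re).sum := by
    have hsplit := Multiset.filter_add_not (fun z : ℂ => 0 < z.re) Nc.roots
    have e1 : (Nc.roots.map (fun c => |c.re|)).sum
        = ((Nc.roots.filter (fun z => 0 < z.re)).map (fun c => |c.re|)).sum
          + ((Nc.roots.filter (fun z : ℂ => ¬ 0 < z.re)).map (fun c => |c.re|)).sum := by
      conv_lhs => rw [← hsplit]
      rw [Multiset.map_add, Multiset.sum_add]
    have e2 : (Nc.roots.map Complex.re).sum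
        = ((Nc.roots.filter (fun z => 0 < z.re)).map Complex.re).sum
          + ((Nc.roots.filter (fun z : ℂ => ¬ 0 < z.re)).map Complex.re).sum := by
      conv_lhs => rw [← hsplit]
      rw [Multiset.map_add, Multiset.sum_add]
    have e3 : ((Nc.roots.filter (fun z => 0 < z.re)).map (fun c => |c.re|)).sum
        = A := by
      rw [hA]
      congr 1
      exact Multiset.map_congr rfl fun c hc =>
        abs_of_pos (Multiset.mem_filter.mp hc).2
    have e4 : ((Nc.roots.filter (fun z : ℂ => ¬ 0 < z.re)).map (fun c => |c.re|)).sum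
        = -(((Nc.roots.filter (fun z : ℂ => ¬ 0 < z.re)).map Complex.re).sum) := by
      have h1 : (Nc.roots.filter (fun z : ℂ => ¬ 0 < z.re)).map (fun c => |c.re|)
          = (Nc.roots.filter (fun z : ℂ => ¬ 0 < z.re)).map (fun c => -c.re) :=
        Multiset.map_congr rfl fun c hc =>
          abs_of_nonpos (le_of_not_gt (Multiset.mem_filter.mp hc).2)
      rw [h1, show (fun c : ℂ => -c.re) = (Neg.neg ∘ Complex.re) from rfl,
        ← Multiset.map_map, Multiset.sum_map_neg']
    rw [e1, e3, e4]
    rw [hA] at *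
    linarith [e2]
  have hVfinal : V = Real.pi * A := by
    rw [hV, sum_map_limit_expand, sum_map_limit_expand, him, hDabs, hNabs2, ← hre]
    ring
  have hA0 : 0 ≤ A := by
    rw [hA]
    refine Multiset.sum_nonneg ?_
    intro x hx
    obtain ⟨c, hc, rfl⟩ := Multiset.mem_map.mp hx
    exact le_of_lt (Multiset.mem_filter.mp hc).2
  refine ⟨hInt, ?_, ?_⟩
  · rw [hval, hVfinal]
  · rw [hval, hVfinal]
    exact mul_nonneg Real.pi_pos.le hA0
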